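/- Residual updates factorize through the variance semi-ring: for every finite index set I, every family of reals (yᵢ)_{i∈I}, and every prediction p ∈ ℝ, the ⊕-sum of the lifted residuals equals the ⊕-sum of the lifted original values multiplied (via ⊗) by the lift of the additive inverse of the prediction; that is, ⊕_{i∈I} (1, yᵢ − p, (yᵢ − p)²) = (⊕_{i∈I} (1, yᵢ, yᵢ²)) ⊗ (1, −p, p²). -/

import Mathlib

/-- The carrier of the variance semi-ring: `ℤ × ℝ × ℝ`.  Its addition `⊕` is
componentwise, which coincides with the product additive monoid structure, so
`⊕`-sums are ordinary `Finset` sums in this type. -/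
abbrev VarSR : Type := ℤ × ℝ × ℝ

/-- Multiplication `⊗` of the variance semi-ring. -/
def vMul (x y : VarSR) : VarSR :=
  (x.1 * y.1, x.2.1 * y.1 + y.2.1 * x.1,
    x.2.2 * y.1 + y.2.2 * x.1 + 2 * x.2.1 * y.2.1)

/-- Residual updates factorize through the variance semi-ring:
`⊕_{i∈I} (1, yᵢ − p, (yᵢ − p)²) = (⊕_{i∈I} (1, yᵢ, yᵢ²)) ⊗ (1, −p, p²)`. -/
theorem residual_update_factorizes {ι : Type*} (I : Finset ι) (y : ι → ℝ) (p : ℝ) :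
    (∑ i ∈ I, (((1 : ℤ), y i - p, (y i - p) ^ 2) : VarSR)) =
      vMul (∑ i ∈ I, (((1 : ℤ), y i, (y i) ^ 2) : VarSR)) ((1 : ℤ), -p, p ^ 2) := by
  classical
  induction I using Finset.induction_on with
  | empty => simp [vMul]; rfl
  | insert _ _ h ih =>
    rw [Finset.sum_insert h, Finset.sum_insert h, ih]
    simp only [vMul, Prod.ext_iff, Prod.fst_add, Prod.snd_add]
    refine ⟨by ring, by push_cast; ring, by push_cast; ring⟩
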